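/- Let t > 0 be a real number. The function f(x) = sinh((x+1)t)/sinh(xt) is strictly decreasing on (0, +∞), and f(x) tends to e^t as x tends to +∞. -/

import Mathlib

open Real Filter

private lemma sinh_pos_aux (t x : ℝ) (ht : 0 < t) (hx : 0 < x) : 0 < Real.sinh (x * t) :=
  Real.sinh_pos_iff.mpr (mul_pos hx ht)

private lemma f_eq (t x : ℝ) (ht : 0 < t) (hx : 0 < x) :
    Real.sinh ((x + 1) * t) / Real.sinh (x * t) =
      Real.cosh t + Real.sinh t * (Real.cosh (x * t) / Real.sinh (x * t)) := by
  have hs := sinh_pos_aux t x ht hx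
  have : (x + 1) * t = x * t + t := by ring
  rw [this, Real.sinh_add]
  field_simp

private lemma coth_eq (t x : ℝ) (ht : 0 < t) (hx : 0 < x) :
    Real.cosh (x * t) / Real.sinh (x * t) =
      (1 + Real.exp (-(2 * t) * x)) / (1 - Real.exp (-(2 * t) * x)) := by
  have hs := sinh_pos_aux t x ht hx
  have h1 : Real.exp (-(2 * t) * x) < 1 := by
    rw [Real.exp_lt_one_iff]; nlinarith
  have hd : (0:ℝ) < 1 - Real.exp (-(2 * t) * x) := by linarith
  rw [div_eq_div_iff hs.ne' hd.ne', Real.cosh_eq, Real.sinh_eq]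
  have e1 : Real.exp (-(2 * t) * x) = Real.exp (-(x*t)) * Real.exp (-(x*t)) := by
    rw [← Real.exp_add]; ring_nf
  have e2 : Real.exp (x*t) * Real.exp (-(x*t)) = 1 := by
    rw [← Real.exp_add]; simp
  have hs' : 0 < Real.exp (x*t) - Real.exp (-(x*t)) := by
    rw [Real.sinh_eq] at hs; linarith
  rw [e1]
  nlinarith [e2, Real.exp_pos (-(x*t))]

theorem stmt6 (t : ℝ) (ht : 0 < t) :
    StrictAntiOn (fun x : ℝ => Real.sinh ((x + 1) * t) / Real.sinh (x * t)) (Set.Ioi 0) ∧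
    Filter.Tendsto (fun x : ℝ => Real.sinh ((x + 1) * t) / Real.sinh (x * t))
      Filter.atTop (nhds (Real.exp t)) := by
  constructor
  · intro a ha b hb hab
    simp only [Set.mem_Ioi] at ha hb
    have hsa := sinh_pos_aux t a ht ha
    have hsb := sinh_pos_aux t b ht hb
    simp only
    rw [f_eq t a ht ha, f_eq t b ht hb]
    have hst : 0 < Real.sinh t := Real.sinh_pos_iff.mpr ht
    have key : Real.cosh (b * t) / Real.sinh (b * t) < Real.cosh (a * t) / Real.sinh (a * t) := by
      rw [div_lt_div_iff₀ hsb hsa]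
      have hpos : 0 < Real.sinh (b * t - a * t) :=
        Real.sinh_pos_iff.mpr (by nlinarith)
      rw [Real.sinh_sub] at hpos
      nlinarith
    nlinarith
  · have h2t : (0:ℝ) < 2 * t := by linarith
    have hexp : Tendsto (fun x : ℝ => Real.exp (-(2 * t) * x)) atTop (nhds 0) := by
      have : Tendsto (fun x : ℝ => -(2 * t) * x) atTop atBot := by
        apply Tendsto.const_mul_atTop_of_neg (by linarith) tendsto_id
      exact Real.tendsto_exp_atBot.comp this
    have hquot : Tendsto (fun x : ℝ =>
        (1 + Real.exp (-(2 * t) * x)) / (1 - Real.exp (-(2 * t) * x))) atTop (nhds 1) := by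
      have hne : (1:ℝ) - 0 ≠ 0 := by norm_num
      have := (((tendsto_const_nhds (x := (1:ℝ))).add hexp).div
        ((tendsto_const_nhds (x := (1:ℝ))).sub hexp) hne)
      simpa [Pi.div_def] using this
    have hmain : Tendsto (fun x : ℝ =>
        Real.cosh t + Real.sinh t * ((1 + Real.exp (-(2 * t) * x)) / (1 - Real.exp (-(2 * t) * x))))
        atTop (nhds (Real.exp t)) := by
      have := (tendsto_const_nhds (x := Real.cosh t)).add
        ((tendsto_const_nhds (x := Real.sinh t)).mul hquot)
      simpa [Real.cosh_add_sinh] using this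
    refine hmain.congr' ?_
    filter_upwards [eventually_gt_atTop 0] with x hx
    rw [f_eq t x ht hx, coth_eq t x ht hx]
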